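/- (Lemma 1(e) of the paper.) Let n ≥ 2 and treat the frame values A = (A_{iβ}) and the frame-derivative values B = (B_{iβγ}) as independent variables. At any pair (A, B) with A invertible, the partial derivative of ω² with respect to the entry B_{iβγ}, holding A fixed, equals (2/(1 − n)) [ λ_i^γ ω^β − λ_i^β ω^γ ]. -/

import Mathlib

open scoped BigOperators
open Matrix
set_option maxHeartbeats 1000000

/-- The inverse-frame components λ_i^α of a frame matrix `A` (so that
Σ_i λ_i^α A_{iν} = δ^α_ν when `A` is invertible). -/
noncomputable def lamUp {n : ℕ} (A : Fin n → Fin n → ℝ) (i α : Fin n) : ℝ :=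
  (Matrix.of A)⁻¹ α i

/-- The metric g_{μν} = Σ_i A_{iμ} A_{iν} built from the frame matrix `A`. -/
noncomputable def gOf {n : ℕ} (A : Fin n → Fin n → ℝ) : Matrix (Fin n) (Fin n) ℝ :=
  Matrix.of fun μ ν => ∑ i, A i μ * A i ν

/-- ω_μ(A,B) = (1/(1−n)) Σ_{i,α} λ_i^α (B_{iμα} − B_{iαμ}), with the frame values `A`
and the frame-derivative values `B` treated as independent variables. -/
noncomputable def omegaOf {n : ℕ}
    (p : (Fin n → Fin n → ℝ) × (Fin n → Fin n → Fin n → ℝ)) (μ : Fin n) : ℝ :=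
  (1 / (1 - (n : ℝ))) * ∑ i, ∑ α, lamUp p.1 i α * (p.2 i μ α - p.2 i α μ)

/-- ω^β(A,B) = Σ_α g^{βα} ω_α. -/
noncomputable def omegaUpOf {n : ℕ}
    (p : (Fin n → Fin n → ℝ) × (Fin n → Fin n → Fin n → ℝ)) (β : Fin n) : ℝ :=
  ∑ α, (gOf p.1)⁻¹ β α * omegaOf p α

/-- ω²(A,B) = Σ_{μ,ν} g^{μν} ω_μ ω_ν. -/
noncomputable def omegaSqOf {n : ℕ}
    (p : (Fin n → Fin n → ℝ) × (Fin n → Fin n → Fin n → ℝ)) : ℝ :=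
  ∑ μ, ∑ ν, (gOf p.1)⁻¹ μ ν * omegaOf p μ * omegaOf p ν

section Helpers

variable {E : Type*} [NormedAddCommGroup E] [NormedSpace ℝ E]

theorem myDiffProd {ι : Type*} [DecidableEq ι] (s : Finset ι) (g : ι → E → ℝ) {x : E}
    (h : ∀ j ∈ s, DifferentiableAt ℝ (g j) x) :
    DifferentiableAt ℝ (fun y => ∏ j ∈ s, g j y) x := by
  classical
  induction s using Finset.induction_on with
  | empty => simp
  | @insert a t hj ih =>
    simp only [Finset.prod_insert hj]
    exact (h a (Finset.mem_insert_self a t)).mul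
      (ih fun j hjt => h j (Finset.mem_insert_of_mem hjt))

theorem myDiffDet {n : ℕ} {F : E → Matrix (Fin n) (Fin n) ℝ} {x : E}
    (h : ∀ a b, DifferentiableAt ℝ (fun e => F e a b) x) :
    DifferentiableAt ℝ (fun e => (F e).det) x := by
  simp only [Matrix.det_apply']
  exact DifferentiableAt.fun_sum fun σ _ =>
    ((myDiffProd Finset.univ (fun j e => F e (σ j) j) fun j _ => h (σ j) j).const_mul _)

theorem myDiffInvEntry {n : ℕ} {F : E → Matrix (Fin n) (Fin n) ℝ} {x : E}
    (h : ∀ a b, DifferentiableAt ℝ (fun e => F e a b) x)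
    (hd : (F x).det ≠ 0) (a b : Fin n) :
    DifferentiableAt ℝ (fun e => (F e)⁻¹ a b) x := by
  have key : ∀ e, (F e)⁻¹ a b = (F e).adjugate a b / (F e).det := by
    intro e
    rw [Matrix.inv_def]
    simp [Ring.inverse_eq_inv', div_eq_mul_inv, mul_comm]
  simp only [key]
  have hadj : DifferentiableAt ℝ (fun e => (F e).adjugate a b) x := by
    simp only [Matrix.adjugate_apply]
    refine myDiffDet fun c d => ?_
    simp only [Matrix.updateRow_apply]
    by_cases hc : c = b
    · simp [hc]
    · simp only [hc, if_false]; exact h c d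
  simp only [div_eq_mul_inv]
  exact hadj.mul ((myDiffDet h).inv hd)

end Helpers

section Aux

variable {n : ℕ}

/-- gOf A = Aᵀ * A. -/
theorem gOf_eq (A : Fin n → Fin n → ℝ) :
    gOf A = (Matrix.of A)ᵀ * (Matrix.of A) := by
  ext μ ν
  simp [gOf, Matrix.mul_apply, Matrix.transpose_apply]

theorem gOf_det_ne_zero {A : Fin n → Fin n → ℝ} (hA : IsUnit (Matrix.of A).det) :
    (gOf A).det ≠ 0 := by
  rw [gOf_eq, Matrix.det_mul, Matrix.det_transpose]
  have := hA.ne_zero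
  exact mul_ne_zero (by simpa using hA.ne_zero) (by simpa using hA.ne_zero)

theorem gInv_symm {A : Fin n → Fin n → ℝ} (μ ν : Fin n) :
    (gOf A)⁻¹ μ ν = (gOf A)⁻¹ ν μ := by
  have h : (gOf A)ᵀ = gOf A := by
    ext μ ν; simp [gOf, Matrix.transpose_apply, mul_comm]
  conv_lhs => rw [← h, ← Matrix.transpose_nonsing_inv]
  rfl

theorem diff_omegaOf {A : Fin n → Fin n → ℝ} {B : Fin n → Fin n → Fin n → ℝ}
    (hA : IsUnit (Matrix.of A).det) (μ : Fin n) :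
    DifferentiableAt ℝ
      (fun p : (Fin n → Fin n → ℝ) × (Fin n → Fin n → Fin n → ℝ) => omegaOf p μ) (A, B) := by
  have hlam : ∀ i' α, DifferentiableAt ℝ
      (fun p : (Fin n → Fin n → ℝ) × (Fin n → Fin n → Fin n → ℝ) => lamUp p.1 i' α) (A, B) := by
    intro i' α
    exact myDiffInvEntry
      (F := fun p : (Fin n → Fin n → ℝ) × (Fin n → Fin n → Fin n → ℝ) => Matrix.of p.1)
      (fun a b =>
        (by fun_prop :
          DifferentiableAt ℝ
            (fun p : (Fin n → Fin n → ℝ) × (Fin n → Fin n → Fin n → ℝ) => p.1 a b) (A, B)))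
      (by simpa using hA.ne_zero) α i'
  simp only [omegaOf]
  refine DifferentiableAt.const_mul ?_ _
  refine DifferentiableAt.fun_sum fun i' _ => DifferentiableAt.fun_sum fun α _ => ?_
  exact (hlam i' α).mul (by fun_prop)

theorem diff_omegaSqOf {A : Fin n → Fin n → ℝ} {B : Fin n → Fin n → Fin n → ℝ}
    (hA : IsUnit (Matrix.of A).det) :
    DifferentiableAt ℝ
      (fun p : (Fin n → Fin n → ℝ) × (Fin n → Fin n → Fin n → ℝ) => omegaSqOf p) (A, B) := by
  have hg : ∀ μ ν, DifferentiableAt ℝ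
      (fun p : (Fin n → Fin n → ℝ) × (Fin n → Fin n → Fin n → ℝ) => (gOf p.1)⁻¹ μ ν) (A, B) := by
    intro μ ν
    refine myDiffInvEntry (F := fun p : (Fin n → Fin n → ℝ) × (Fin n → Fin n → Fin n → ℝ) => gOf p.1) (fun a b => ?_) (gOf_det_ne_zero hA) μ ν
    simp only [gOf, Matrix.of_apply]
    exact DifferentiableAt.fun_sum fun i' _ => by fun_prop
  simp only [omegaSqOf]
  refine DifferentiableAt.fun_sum fun μ _ => DifferentiableAt.fun_sum fun ν _ => ?_
  exact ((hg μ ν).mul (diff_omegaOf hA μ)).mul (diff_omegaOf hA ν)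

end Aux

/-- (Lemma 1(e) of the paper.) At any pair (A,B) with A invertible,
∂ω²/∂B_{iβγ} = (2/(1 − n)) [ λ_i^γ ω^β − λ_i^β ω^γ ]. -/
theorem sap_lemma1e
    (n : ℕ) (hn : 2 ≤ n)
    (A : Fin n → Fin n → ℝ) (B : Fin n → Fin n → Fin n → ℝ)
    (hA : IsUnit (Matrix.of A).det)
    (i β γ : Fin n) :
    fderiv ℝ (fun p : (Fin n → Fin n → ℝ) × (Fin n → Fin n → Fin n → ℝ) => omegaSqOf p)
        (A, B) (0, fun i' β' γ' => if i' = i ∧ β' = β ∧ γ' = γ then (1:ℝ) else 0)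
      = (2 / (1 - (n : ℝ))) *
          (lamUp A i γ * omegaUpOf (A, B) β - lamUp A i β * omegaUpOf (A, B) γ) := by
  classical
  set Edir : Fin n → Fin n → Fin n → ℝ :=
    fun i' β' γ' => if i' = i ∧ β' = β ∧ γ' = γ then (1:ℝ) else 0 with hEdir
  set c : ℝ := 1 / (1 - (n : ℝ)) with hc
  set G : Matrix (Fin n) (Fin n) ℝ := (gOf A)⁻¹ with hG
  set ω : Fin n → ℝ := fun μ => omegaOf (A, B) μ with hω0
  set d : Fin n → ℝ :=
    fun μ => c * ∑ i', ∑ α, lamUp A i' α * (Edir i' μ α - Edir i' α μ) with hd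
  -- derivative of ω_μ along the line t ↦ (A, B + t • Edir)
  have hω : ∀ μ, HasDerivAt (fun t : ℝ => omegaOf (A, B + t • Edir) μ) (d μ) 0 := by
    intro μ
    have key : ∀ t : ℝ, omegaOf (A, B + t • Edir) μ = ω μ + t * d μ := by
      intro t
      simp only [omegaOf, hω0, hd, Pi.add_apply, Pi.smul_apply, smul_eq_mul, hc]
      have h1 : ∀ i' α : Fin n,
          lamUp A i' α * (B i' μ α + t * Edir i' μ α - (B i' α μ + t * Edir i' α μ))
            = lamUp A i' α * (B i' μ α - B i' α μ)
              + t * (lamUp A i' α * (Edir i' μ α - Edir i' α μ)) := by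
        intro i' α; ring
      simp only [h1, Finset.sum_add_distrib, ← Finset.mul_sum]
      ring
    simp only [key]
    simpa using ((hasDerivAt_id (0:ℝ)).mul_const (d μ)).const_add (ω μ)
  -- derivative of ω² along the line
  have hD : HasDerivAt (fun t : ℝ => omegaSqOf (A, B + t • Edir))
      (∑ μ, ∑ ν, (G μ ν * d μ * ω ν + G μ ν * ω μ * d ν)) 0 := by
    simp only [omegaSqOf]
    refine HasDerivAt.fun_sum fun μ _ => HasDerivAt.fun_sum fun ν _ => ?_
    have h2 := ((hω μ).const_mul (G μ ν)).fun_mul (hω ν)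
    simp only [zero_smul, add_zero] at h2
    convert h2 using 1
  -- the line itself
  have hline : HasDerivAt (fun t : ℝ => ((A, B + t • Edir) :
      (Fin n → Fin n → ℝ) × (Fin n → Fin n → Fin n → ℝ)))
      ((0 : Fin n → Fin n → ℝ), Edir) 0 := by
    refine HasDerivAt.prodMk (hasDerivAt_const _ _) ?_
    simpa using ((hasDerivAt_id (0:ℝ)).smul_const Edir).const_add B
  have hcomp : HasDerivAt (fun t : ℝ => omegaSqOf (A, B + t • Edir))
      (fderiv ℝ (fun p : (Fin n → Fin n → ℝ) × (Fin n → Fin n → Fin n → ℝ) => omegaSqOf p)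
        (A, B) ((0 : Fin n → Fin n → ℝ), Edir)) 0 := by
    have h3 := (diff_omegaSqOf (B := B) hA).hasFDerivAt
    exact h3.comp_hasDerivAt_of_eq 0 hline (by simp)
  have huniq := hcomp.unique hD
  rw [huniq]
  -- now pure algebra
  have h1 : ∀ μ, ∑ ν, G μ ν * d μ * ω ν = d μ * omegaUpOf (A, B) μ := by
    intro μ
    rw [omegaUpOf, Finset.mul_sum]
    exact Finset.sum_congr rfl fun ν _ => by rw [hω0]; ring
  have h2 : ∑ μ, ∑ ν, G μ ν * ω μ * d ν = ∑ ν, d ν * omegaUpOf (A, B) ν := by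
    rw [Finset.sum_comm]
    refine Finset.sum_congr rfl fun ν _ => ?_
    rw [omegaUpOf, Finset.mul_sum]
    refine Finset.sum_congr rfl fun μ _ => ?_
    rw [hG, gInv_symm μ ν, hω0]
    ring
  have hsplit : ∑ μ, ∑ ν, (G μ ν * d μ * ω ν + G μ ν * ω μ * d ν)
      = 2 * ∑ μ, d μ * omegaUpOf (A, B) μ := by
    simp only [Finset.sum_add_distrib]
    rw [h2]
    rw [Finset.sum_congr rfl fun μ _ => h1 μ]
    ring
  rw [hsplit]
  -- evaluate d
  have hd_eval : ∀ μ, d μ = c * ((if μ = β then lamUp A i γ else 0)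
      - (if μ = γ then lamUp A i β else 0)) := by
    intro μ
    rw [hd]
    congr 1
    simp only [hEdir, mul_sub, mul_ite, mul_one, mul_zero, Finset.sum_sub_distrib,
      ite_and, Finset.sum_ite_eq, Finset.sum_ite_eq', Finset.mem_univ, if_true]
    congr 1
    · by_cases hb : μ = β <;> simp [hb]
    · by_cases hg2 : μ = γ <;> simp [hg2]
  have hpt : ∀ μ, d μ * omegaUpOf (A, B) μ
      = c * ((if μ = β then lamUp A i γ * omegaUpOf (A, B) μ else 0)
        - (if μ = γ then lamUp A i β * omegaUpOf (A, B) μ else 0)) := by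
    intro μ
    rw [hd_eval μ]
    split_ifs <;> ring
  rw [Finset.sum_congr rfl fun μ _ => hpt μ, ← Finset.mul_sum, Finset.sum_sub_distrib]
  simp only [Finset.sum_ite_eq', Finset.mem_univ, if_true]
  rw [hc]
  ring
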